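/- arXiv:1607.04961 — 7 statements merged into one kernel-verified Lean document; each statement's English description precedes it below -/
import Mathlib

section
/- Let f : ℂ → ℂ be nonvanishing and sufficiently differentiable on an open set, and set y = -(3/2) f'/f. Then y satisfies the generalised Chazy equation with k=3 (i.e. y''' - 2y''y + 3(y')² - (4/27)(6y'-y²)² = 0) if and only if 2f''''f - 2f'''f' + (f'')² = 0 on that set. -/
/-- For nonvanishing `f`, `y = -(3/2) f'/f` solves the generalised Chazy equation with `k = 3`
on an open set iff `2f''''f - 2f'''f' + (f'')² = 0` there. -/
theorem chazy_k3_linearisation (U : Set ℂ) (hU : IsOpen U) (f : ℂ → ℂ)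
    (hf : ContDiffOn ℂ 4 f U) (hf0 : ∀ x ∈ U, f x ≠ 0)
    (y : ℂ → ℂ) (hy : ∀ x : ℂ, y x = -(3 / 2) * deriv f x / f x) :
    (∀ x ∈ U, iteratedDeriv 3 y x - 2 * iteratedDeriv 2 y x * y x + 3 * (deriv y x) ^ 2
        - (4 / 27) * (6 * deriv y x - (y x) ^ 2) ^ 2 = 0)
      ↔ (∀ x ∈ U, 2 * iteratedDeriv 4 f x * f x - 2 * iteratedDeriv 3 f x * deriv f x
          + (iteratedDeriv 2 f x) ^ 2 = 0) := by
  -- smoothness of iterated derivatives of f on U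
  have hfc1 : ContDiffOn ℂ 3 (deriv f) U := hf.deriv_of_isOpen hU (by norm_num)
  have hfc2 : ContDiffOn ℂ 2 (deriv (deriv f)) U := hfc1.deriv_of_isOpen hU (by norm_num)
  have hfc3 : ContDiffOn ℂ 1 (deriv (deriv (deriv f))) U := hfc2.deriv_of_isOpen hU (by norm_num)
  -- smoothness of y on U
  have hyfun : y = fun t => -(3 / 2) * deriv f t / f t := funext hy
  have hyC : ContDiffOn ℂ 3 y U := by
    rw [hyfun]
    exact (contDiffOn_const.mul hfc1).div (hf.of_le (by norm_num)) hf0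
  have hyc1 : ContDiffOn ℂ 2 (deriv y) U := hyC.deriv_of_isOpen hU (by norm_num)
  have hyc2 : ContDiffOn ℂ 1 (deriv (deriv y)) U := hyc1.deriv_of_isOpen hU (by norm_num)
  -- differentiability at points of U
  have df : ∀ x ∈ U, DifferentiableAt ℂ f x := fun x hx =>
    (hf.contDiffAt (hU.mem_nhds hx)).differentiableAt (by norm_num)
  have df1 : ∀ x ∈ U, DifferentiableAt ℂ (deriv f) x := fun x hx =>
    (hfc1.contDiffAt (hU.mem_nhds hx)).differentiableAt (by norm_num)
  have df2 : ∀ x ∈ U, DifferentiableAt ℂ (deriv (deriv f)) x := fun x hx =>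
    (hfc2.contDiffAt (hU.mem_nhds hx)).differentiableAt (by norm_num)
  have dy : ∀ x ∈ U, DifferentiableAt ℂ y x := fun x hx =>
    (hyC.contDiffAt (hU.mem_nhds hx)).differentiableAt (by norm_num)
  have dy1 : ∀ x ∈ U, DifferentiableAt ℂ (deriv y) x := fun x hx =>
    (hyc1.contDiffAt (hU.mem_nhds hx)).differentiableAt (by norm_num)
  have dy2 : ∀ x ∈ U, DifferentiableAt ℂ (deriv (deriv y)) x := fun x hx =>
    (hyc2.contDiffAt (hU.mem_nhds hx)).differentiableAt (by norm_num)
  -- the basic relation f' = -(2/3) y f on U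
  have h1 : ∀ x ∈ U, deriv f x = -(2 / 3) * y x * f x := by
    intro x hx
    rw [hy x]
    field_simp [hf0 x hx]
  -- second derivative
  have h2 : ∀ x ∈ U, deriv (deriv f) x
      = -(2 / 3) * deriv y x * f x + -(2 / 3) * y x * deriv f x := by
    intro x hx
    have hev : deriv f =ᶠ[nhds x] fun t => -(2 / 3) * y t * f t := by
      filter_upwards [hU.mem_nhds hx] with t ht using h1 t ht
    rw [hev.deriv_eq]
    have hd : HasDerivAt (fun t => -(2 / 3) * y t * f t)
        (-(2 / 3) * deriv y x * f x + -(2 / 3) * y x * deriv f x) x :=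
      ((dy x hx).hasDerivAt.const_mul (-(2 / 3) : ℂ)).mul (df x hx).hasDerivAt
    rw [hd.deriv]
  -- third derivative
  have h3 : ∀ x ∈ U, deriv (deriv (deriv f)) x
      = -(2 / 3) * deriv (deriv y) x * f x + -(2 / 3) * deriv y x * deriv f x
        + (-(2 / 3) * deriv y x * deriv f x + -(2 / 3) * y x * deriv (deriv f) x) := by
    intro x hx
    have hev : deriv (deriv f) =ᶠ[nhds x]
        fun t => -(2 / 3) * deriv y t * f t + -(2 / 3) * y t * deriv f t := by
      filter_upwards [hU.mem_nhds hx] with t ht using h2 t ht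
    rw [hev.deriv_eq]
    have hA : HasDerivAt (fun t => -(2 / 3) * deriv y t * f t)
        (-(2 / 3) * deriv (deriv y) x * f x + -(2 / 3) * deriv y x * deriv f x) x :=
      ((dy1 x hx).hasDerivAt.const_mul (-(2 / 3) : ℂ)).mul (df x hx).hasDerivAt
    have hB : HasDerivAt (fun t => -(2 / 3) * y t * deriv f t)
        (-(2 / 3) * deriv y x * deriv f x + -(2 / 3) * y x * deriv (deriv f) x) x :=
      ((dy x hx).hasDerivAt.const_mul (-(2 / 3) : ℂ)).mul (df1 x hx).hasDerivAt
    exact (hA.add hB).deriv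
  -- fourth derivative
  have h4 : ∀ x ∈ U, deriv (deriv (deriv (deriv f))) x
      = -(2 / 3) * deriv (deriv (deriv y)) x * f x + -(2 / 3) * deriv (deriv y) x * deriv f x
          + (-(2 / 3) * deriv (deriv y) x * deriv f x + -(2 / 3) * deriv y x * deriv (deriv f) x)
        + (-(2 / 3) * deriv (deriv y) x * deriv f x + -(2 / 3) * deriv y x * deriv (deriv f) x
          + (-(2 / 3) * deriv y x * deriv (deriv f) x
            + -(2 / 3) * y x * deriv (deriv (deriv f)) x)) := by
    intro x hx
    have hev : deriv (deriv (deriv f)) =ᶠ[nhds x]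
        fun t => -(2 / 3) * deriv (deriv y) t * f t + -(2 / 3) * deriv y t * deriv f t
          + (-(2 / 3) * deriv y t * deriv f t + -(2 / 3) * y t * deriv (deriv f) t) := by
      filter_upwards [hU.mem_nhds hx] with t ht using h3 t ht
    rw [hev.deriv_eq]
    have hA : HasDerivAt (fun t => -(2 / 3) * deriv (deriv y) t * f t)
        (-(2 / 3) * deriv (deriv (deriv y)) x * f x
          + -(2 / 3) * deriv (deriv y) x * deriv f x) x :=
      ((dy2 x hx).hasDerivAt.const_mul (-(2 / 3) : ℂ)).mul (df x hx).hasDerivAt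
    have hB : HasDerivAt (fun t => -(2 / 3) * deriv y t * deriv f t)
        (-(2 / 3) * deriv (deriv y) x * deriv f x
          + -(2 / 3) * deriv y x * deriv (deriv f) x) x :=
      ((dy1 x hx).hasDerivAt.const_mul (-(2 / 3) : ℂ)).mul (df1 x hx).hasDerivAt
    have hC : HasDerivAt (fun t => -(2 / 3) * y t * deriv (deriv f) t)
        (-(2 / 3) * deriv y x * deriv (deriv f) x
          + -(2 / 3) * y x * deriv (deriv (deriv f)) x) x :=
      ((dy x hx).hasDerivAt.const_mul (-(2 / 3) : ℂ)).mul (df2 x hx).hasDerivAt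
    exact ((hA.add hB).add (hB.add hC)).deriv
  -- rewriting iterated derivatives as deriv chains
  have e2f : iteratedDeriv 2 f = deriv (deriv f) := by
    rw [show (2 : ℕ) = 1 + 1 from rfl, iteratedDeriv_succ, iteratedDeriv_one]
  have e3f : iteratedDeriv 3 f = deriv (deriv (deriv f)) := by
    rw [show (3 : ℕ) = 2 + 1 from rfl, iteratedDeriv_succ, e2f]
  have e4f : iteratedDeriv 4 f = deriv (deriv (deriv (deriv f))) := by
    rw [show (4 : ℕ) = 3 + 1 from rfl, iteratedDeriv_succ, e3f]
  have e2y : iteratedDeriv 2 y = deriv (deriv y) := by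
    rw [show (2 : ℕ) = 1 + 1 from rfl, iteratedDeriv_succ, iteratedDeriv_one]
  have e3y : iteratedDeriv 3 y = deriv (deriv (deriv y)) := by
    rw [show (3 : ℕ) = 2 + 1 from rfl, iteratedDeriv_succ, e2y]
  -- the key algebraic identity
  have key : ∀ x ∈ U,
      2 * deriv (deriv (deriv (deriv f))) x * f x
        - 2 * deriv (deriv (deriv f)) x * deriv f x + (deriv (deriv f) x) ^ 2
      = -(4 / 3) * f x ^ 2 * (deriv (deriv (deriv y)) x - 2 * deriv (deriv y) x * y x
          + 3 * (deriv y x) ^ 2 - (4 / 27) * (6 * deriv y x - (y x) ^ 2) ^ 2) := by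
    intro x hx
    rw [h4 x hx, h3 x hx, h2 x hx, h1 x hx]
    ring
  constructor
  · intro h x hx
    rw [e4f, e3f, e2f, key x hx]
    have hE := h x hx
    rw [e3y, e2y] at hE
    rw [hE, mul_zero]
  · intro h x hx
    rw [e3y, e2y]
    have hT := h x hx
    rw [e4f, e3f, e2f, key x hx] at hT
    rcases mul_eq_zero.mp hT with h' | h'
    · exfalso
      have := hf0 x hx
      rcases mul_eq_zero.mp h' with h'' | h''
      · norm_num at h''
      · exact this (pow_eq_zero_iff (by norm_num) |>.mp h'')
    · exact h'
end

section
/- If f : ℂ → ℂ is five times differentiable and satisfies 2f''''f - 2f'''f' + (f'')² = 0 on an open connected set with f nonvanishing, then f''''' = 0, hence f is a polynomial of degree at most 4; moreover a quartic f(t) = at⁴ + bt³ + ct² + dt + e satisfies 2f''''f - 2f'''f' + (f'')² = 0 identically if and only if 12ae - 3bd + c² = 0. -/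
/-- A function with zero derivative on an open preconnected set is constant there. -/
lemma chazy_const_of_hasDerivAt_zero {U : Set ℂ} (hU : IsOpen U) (hconn : IsPreconnected U)
    {g : ℂ → ℂ} (hg : ∀ x ∈ U, HasDerivAt g 0 x) {x₀ : ℂ} (hx₀ : x₀ ∈ U) :
    ∀ x ∈ U, g x = g x₀ := by
  have hdiff : DifferentiableOn ℂ g U := fun x hx =>
    (hg x hx).differentiableAt.differentiableWithinAt
  have hana : AnalyticOnNhd ℂ (fun x => g x - g x₀) U :=
    (hdiff.analyticOnNhd hU).sub analyticOnNhd_const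
  obtain ⟨r, hr, hball⟩ := Metric.isOpen_iff.1 hU x₀ hx₀
  have hconstball : ∀ y ∈ Metric.ball x₀ r, g y = g x₀ := by
    intro y hy
    apply (convex_ball x₀ r).is_const_of_fderivWithin_eq_zero (hdiff.mono hball) ?_ hy
      (Metric.mem_ball_self hr)
    intro z hz
    rw [fderivWithin_of_isOpen Metric.isOpen_ball hz]
    have hz' : HasFDerivAt g ((1 : ℂ →L[ℂ] ℂ).smulRight (0:ℂ)) z := (hg z (hball hz)).hasFDerivAt
    rw [hz'.fderiv]; ext; simp
  have hev : (fun x => g x - g x₀) =ᶠ[nhds x₀] 0 := by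
    filter_upwards [Metric.ball_mem_nhds x₀ hr] with y hy
    simp [hconstball y hy]
  have := hana.eqOn_zero_of_preconnected_of_eventuallyEq_zero hconn hx₀ hev
  intro x hx
  have h := this hx
  simpa [sub_eq_zero] using h

lemma chazy_hasDerivAt_quartic (a b c d e t : ℂ) :
    HasDerivAt (fun t : ℂ => a*t^4+b*t^3+c*t^2+d*t+e) (4*a*t^3+3*b*t^2+2*c*t+d) t := by
  have h := (((((hasDerivAt_pow 4 t).const_mul a).add ((hasDerivAt_pow 3 t).const_mul b)).add
    ((hasDerivAt_pow 2 t).const_mul c)).add ((hasDerivAt_id t).const_mul d)).add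
    (hasDerivAt_const t e)
  refine h.congr_deriv ?_
  norm_num <;> ring

lemma chazy_hasDerivAt_cubic (a b c d t : ℂ) :
    HasDerivAt (fun t : ℂ => a*t^3+b*t^2+c*t+d) (3*a*t^2+2*b*t+c) t := by
  have h := ((((hasDerivAt_pow 3 t).const_mul a).add ((hasDerivAt_pow 2 t).const_mul b)).add
    ((hasDerivAt_id t).const_mul c)).add (hasDerivAt_const t d)
  refine h.congr_deriv ?_
  norm_num <;> ring

lemma chazy_hasDerivAt_quadratic (a b c t : ℂ) :
    HasDerivAt (fun t : ℂ => a*t^2+b*t+c) (2*a*t+b) t := by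
  have h := (((hasDerivAt_pow 2 t).const_mul a).add ((hasDerivAt_id t).const_mul b)).add
    (hasDerivAt_const t c)
  refine h.congr_deriv ?_
  norm_num <;> ring

lemma chazy_hasDerivAt_linear (a b t : ℂ) :
    HasDerivAt (fun t : ℂ => a*t+b) a t := by
  have h := ((hasDerivAt_id t).const_mul a).add (hasDerivAt_const t b)
  exact h.congr_deriv (by norm_num)

lemma chazy_step {U : Set ℂ} (hU : IsOpen U) (hconn : IsPreconnected U)
    {g P : ℂ → ℂ} {P' : ℂ → ℂ}
    (hP : ∀ x : ℂ, HasDerivAt P (P' x) x)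
    (hg : ∀ x ∈ U, HasDerivAt g (P' x) x) {x₀ : ℂ} (hx₀ : x₀ ∈ U) :
    ∀ x ∈ U, g x = P x + (g x₀ - P x₀) := by
  have key := chazy_const_of_hasDerivAt_zero hU hconn (g := fun y => g y - P y)
    (fun x hx => by have h := (hg x hx).sub (hP x); simp only [sub_self] at h; exact h) hx₀
  intro x hx
  have h := key x hx
  linear_combination h


/-- If `f` is five times differentiable, nonvanishing, and satisfies
`2f''''f - 2f'''f' + (f'')² = 0` on an open connected set, then `f''''' = 0` there, hence
`f` is a polynomial of degree at most 4; moreover a quartic `at⁴+bt³+ct²+dt+e` satisfies the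
equation identically iff `12ae - 3bd + c² = 0`. -/
theorem chazy_k3_quartic (U : Set ℂ) (hU : IsOpen U) (hconn : IsConnected U) (f : ℂ → ℂ)
    (hf : ContDiffOn ℂ 5 f U) (hf0 : ∀ x ∈ U, f x ≠ 0)
    (heq : ∀ x ∈ U, 2 * iteratedDeriv 4 f x * f x - 2 * iteratedDeriv 3 f x * deriv f x
        + (iteratedDeriv 2 f x) ^ 2 = 0) :
    (∀ x ∈ U, iteratedDeriv 5 f x = 0) ∧
    (∃ a b c d e : ℂ, ∀ x ∈ U, f x = a * x ^ 4 + b * x ^ 3 + c * x ^ 2 + d * x + e) ∧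
    (∀ a b c d e : ℂ, ∀ g : ℂ → ℂ,
      (∀ t : ℂ, g t = a * t ^ 4 + b * t ^ 3 + c * t ^ 2 + d * t + e) →
      ((∀ t : ℂ, 2 * iteratedDeriv 4 g t * g t - 2 * iteratedDeriv 3 g t * deriv g t
          + (iteratedDeriv 2 g t) ^ 2 = 0) ↔ 12 * a * e - 3 * b * d + c ^ 2 = 0)) := by
  obtain ⟨x₀, hx₀⟩ := hconn.nonempty
  have hpre := hconn.isPreconnected
  have hana : AnalyticOnNhd ℂ f U := (hf.differentiableOn (by norm_num)).analyticOnNhd hU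
  have hiter : ∀ k : ℕ, AnalyticOnNhd ℂ (iteratedDeriv k f) U := by
    intro k
    induction k with
    | zero => simpa [iteratedDeriv_zero] using hana
    | succ n ih => rw [iteratedDeriv_succ]; exact ih.deriv
  have hD : ∀ (k : ℕ) (x : ℂ), x ∈ U →
      HasDerivAt (iteratedDeriv k f) (iteratedDeriv (k+1) f x) x := by
    intro k x hx
    have h := ((hiter k x hx).differentiableAt).hasDerivAt
    rw [iteratedDeriv_succ]
    exact h
  -- Part 1
  have h5 : ∀ x ∈ U, iteratedDeriv 5 f x = 0 := by
    intro x hx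
    have h4 := hD 4 x hx
    have h3 := hD 3 x hx
    have h2 := hD 2 x hx
    have h1 : HasDerivAt (deriv f) (iteratedDeriv 2 f x) x := by
      rw [← iteratedDeriv_one]; exact hD 1 x hx
    have h0 : HasDerivAt f (deriv f x) x := by
      have h := hD 0 x hx
      rwa [iteratedDeriv_zero, iteratedDeriv_one] at h
    have hF : HasDerivAt (fun y => 2 * iteratedDeriv 4 f y * f y
        - 2 * iteratedDeriv 3 f y * deriv f y + (iteratedDeriv 2 f y) ^ 2)
        (2 * iteratedDeriv 5 f x * f x) x := by
      have h := (((h4.const_mul 2).mul h0).sub ((h3.const_mul 2).mul h1)).add (h2.pow 2)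
      refine h.congr_deriv ?_
      norm_num <;> ring
    have hzero : HasDerivAt (fun y => 2 * iteratedDeriv 4 f y * f y
        - 2 * iteratedDeriv 3 f y * deriv f y + (iteratedDeriv 2 f y) ^ 2) 0 x := by
      apply (hasDerivAt_const x (0:ℂ)).congr_of_eventuallyEq
      filter_upwards [hU.mem_nhds hx] with y hy using heq y hy
    have huniq := hF.unique hzero
    rcases mul_eq_zero.1 huniq with h | h
    · rcases mul_eq_zero.1 h with h' | h'
      · norm_num at h'
      · exact h'
    · exact absurd h (hf0 x hx)
  refine ⟨h5, ?_, ?_⟩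
  -- Part 2
  · have h4const : ∀ x ∈ U, iteratedDeriv 4 f x = iteratedDeriv 4 f x₀ := by
      apply chazy_const_of_hasDerivAt_zero hU hpre ?_ hx₀
      intro x hx
      have h := hD 4 x hx
      rwa [h5 x hx] at h
    set A := iteratedDeriv 4 f x₀ with hA
    have h3aff := chazy_step hU hpre (P := fun y => A * y + 0) (P' := fun _ => A)
      (fun x => chazy_hasDerivAt_linear A 0 x)
      (fun x hx => by have h := hD 3 x hx; rwa [h4const x hx] at h) hx₀
    set B := iteratedDeriv 3 f x₀ - (A * x₀ + 0) with hB
    have h2aff := chazy_step hU hpre (P := fun y => A/2 * y^2 + B * y + 0)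
      (P' := fun x => A * x + 0 + B)
      (fun x => by have h := chazy_hasDerivAt_quadratic (A/2) B 0 x; convert h using 1; ring)
      (fun x hx => by have h := hD 2 x hx; rwa [h3aff x hx] at h) hx₀
    set C := iteratedDeriv 2 f x₀ - (A/2 * x₀^2 + B * x₀ + 0) with hC
    have h1aff := chazy_step hU hpre (P := fun y => A/6 * y^3 + B/2 * y^2 + C * y + 0)
      (P' := fun x => A/2 * x^2 + B * x + 0 + C)
      (fun x => by have h := chazy_hasDerivAt_cubic (A/6) (B/2) C 0 x; convert h using 1; ring)
      (fun x hx => by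
        have h : HasDerivAt (deriv f) (iteratedDeriv 2 f x) x := by
          rw [← iteratedDeriv_one]; exact hD 1 x hx
        rwa [h2aff x hx] at h) hx₀
    set D := deriv f x₀ - (A/6 * x₀^3 + B/2 * x₀^2 + C * x₀ + 0) with hD'
    have h0aff := chazy_step hU hpre
      (P := fun y => A/24 * y^4 + B/6 * y^3 + C/2 * y^2 + D * y + 0)
      (P' := fun x => A/6 * x^3 + B/2 * x^2 + C * x + 0 + D)
      (fun x => by
        have h := chazy_hasDerivAt_quartic (A/24) (B/6) (C/2) D 0 x; convert h using 1; ring)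
      (fun x hx => by
        have h : HasDerivAt f (deriv f x) x := by
          have h := hD 0 x hx
          rwa [iteratedDeriv_zero, iteratedDeriv_one] at h
        rwa [h1aff x hx] at h) hx₀
    refine ⟨A/24, B/6, C/2, D,
      f x₀ - (A/24 * x₀^4 + B/6 * x₀^3 + C/2 * x₀^2 + D * x₀ + 0), ?_⟩
    intro x hx
    rw [h0aff x hx]
    ring
  -- Part 3
  · intro a b c d e g hg
    have hgfun : g = fun t => a * t ^ 4 + b * t ^ 3 + c * t ^ 2 + d * t + e := funext hg
    subst hgfun
    have hd1 : deriv (fun t : ℂ => a * t ^ 4 + b * t ^ 3 + c * t ^ 2 + d * t + e)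
        = fun t => 4*a*t^3 + 3*b*t^2 + 2*c*t + d :=
      funext fun t => (chazy_hasDerivAt_quartic a b c d e t).deriv
    have hd2 : iteratedDeriv 2 (fun t : ℂ => a * t ^ 4 + b * t ^ 3 + c * t ^ 2 + d * t + e)
        = fun t => 3*(4*a)*t^2 + 2*(3*b)*t + 2*c := by
      rw [iteratedDeriv_succ, iteratedDeriv_one, hd1]
      exact funext fun t => (chazy_hasDerivAt_cubic (4*a) (3*b) (2*c) d t).deriv
    have hd3 : iteratedDeriv 3 (fun t : ℂ => a * t ^ 4 + b * t ^ 3 + c * t ^ 2 + d * t + e)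
        = fun t => 2*(3*(4*a))*t + 2*(3*b) := by
      rw [iteratedDeriv_succ, hd2]
      exact funext fun t => (chazy_hasDerivAt_quadratic (3*(4*a)) (2*(3*b)) (2*c) t).deriv
    have hd4 : iteratedDeriv 4 (fun t : ℂ => a * t ^ 4 + b * t ^ 3 + c * t ^ 2 + d * t + e)
        = fun _ => 2*(3*(4*a)) := by
      rw [iteratedDeriv_succ, hd3]
      exact funext fun t => (chazy_hasDerivAt_linear (2*(3*(4*a))) (2*(3*b)) t).deriv
    constructor
    · intro h
      have h0 := h 0
      simp only [hd1, hd2, hd3, hd4] at h0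
      norm_num at h0
      linear_combination h0 / 4
    · intro h t
      simp only [hd1, hd2, hd3, hd4]
      linear_combination (4 : ℂ) * h
end

section
/- Suppose y : ℂ → ℂ solves the generalised Chazy equation y''' - 2y''y + 3(y')² - (4/(36-k²))(6y'-y²)² = 0 with k ≠ ±6 on an open set, and let a,b,c,d ∈ ℂ with ad - bc = 1 and cx + d ≠ 0. Then ỹ(x) = (cx+d)⁻² · y((ax+b)/(cx+d)) - 6c/(cx+d) also solves the same generalised Chazy equation. -/
/-- The `SL₂(ℂ)` action `ỹ(x) = (cx+d)⁻² y((ax+b)/(cx+d)) - 6c/(cx+d)` takes solutions of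
the generalised Chazy equation with parameter `k ≠ ±6` to solutions. -/
theorem chazy_sl2_action (k : ℂ) (hk : k ≠ 6) (hk' : k ≠ -6)
    (U : Set ℂ) (hU : IsOpen U) (y : ℂ → ℂ) (hy : ContDiffOn ℂ 3 y U)
    (hsol : ∀ x ∈ U, iteratedDeriv 3 y x - 2 * iteratedDeriv 2 y x * y x
      + 3 * (deriv y x) ^ 2 - (4 / (36 - k ^ 2)) * (6 * deriv y x - (y x) ^ 2) ^ 2 = 0)
    (a b c d : ℂ) (hdet : a * d - b * c = 1)
    (ytil : ℂ → ℂ)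
    (hytil : ∀ x : ℂ, ytil x = ((c * x + d) ^ 2)⁻¹ * y ((a * x + b) / (c * x + d))
      - 6 * c / (c * x + d)) :
    ∀ x : ℂ, c * x + d ≠ 0 → (a * x + b) / (c * x + d) ∈ U →
      iteratedDeriv 3 ytil x - 2 * iteratedDeriv 2 ytil x * ytil x
        + 3 * (deriv ytil x) ^ 2
        - (4 / (36 - k ^ 2)) * (6 * deriv ytil x - (ytil x) ^ 2) ^ 2 = 0 := by
  intro x₀ hs₀ hw₀
  set g : ℂ → ℂ := fun x => (a * x + b) / (c * x + d) with hg_def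
  set S : Set ℂ := {x : ℂ | c * x + d ≠ 0} ∩ g ⁻¹' U with hS_def
  have hopen1 : IsOpen {x : ℂ | c * x + d ≠ 0} := by
    have : Continuous fun x : ℂ => c * x + d := by continuity
    exact isOpen_ne.preimage this
  have hgcont : ContinuousOn g {x : ℂ | c * x + d ≠ 0} := by
    apply ContinuousOn.div
    · fun_prop
    · fun_prop
    · intro x hx; exact hx
  have hS : IsOpen S := hgcont.isOpen_inter_preimage hopen1 hU
  have hx₀S : x₀ ∈ S := ⟨hs₀, hw₀⟩
  -- smoothness of derivatives of y
  have hy1 : ContDiffOn ℂ 2 (deriv y) U := hy.deriv_of_isOpen hU (by norm_num)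
  have hy2 : ContDiffOn ℂ 1 (deriv (deriv y)) U := hy1.deriv_of_isOpen hU (by norm_num)
  set I : ℂ → ℂ := fun x => (c * x + d)⁻¹ with hI_def
  set t1 : ℂ → ℂ := fun x => deriv y (g x) * I x ^ 4 - 2 * c * y (g x) * I x ^ 3
      + 6 * c ^ 2 * I x ^ 2 with ht1_def
  set t2 : ℂ → ℂ := fun x => deriv (deriv y) (g x) * I x ^ 6 - 6 * c * deriv y (g x) * I x ^ 5
      + 6 * c ^ 2 * y (g x) * I x ^ 4 - 12 * c ^ 3 * I x ^ 3 with ht2_def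
  set t3 : ℂ → ℂ := fun x => deriv (deriv (deriv y)) (g x) * I x ^ 8
      - 12 * c * deriv (deriv y) (g x) * I x ^ 7 + 36 * c ^ 2 * deriv y (g x) * I x ^ 6
      - 24 * c ^ 3 * y (g x) * I x ^ 5 + 36 * c ^ 4 * I x ^ 4 with ht3_def
  -- basic hasDerivAt facts at a point of S
  have hlin : ∀ x : ℂ, HasDerivAt (fun x => c * x + d) c x := by
    intro x
    simpa using ((hasDerivAt_id x).const_mul c).add_const d
  have hlin2 : ∀ x : ℂ, HasDerivAt (fun x => a * x + b) a x := by
    intro x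
    simpa using ((hasDerivAt_id x).const_mul a).add_const b
  have hI' : ∀ x ∈ S, HasDerivAt I (-(c * I x ^ 2)) x := by
    intro x hx
    have h := (hlin x).inv hx.1
    refine h.congr_deriv ?_
    rw [hI_def]
    field_simp
  have hg' : ∀ x ∈ S, HasDerivAt g (I x ^ 2) x := by
    intro x hx
    have h := (hlin2 x).div (hlin x) hx.1
    refine h.congr_deriv ?_
    have hnum : a * (c * x + d) - (a * x + b) * c = 1 := by linear_combination hdet
    rw [hnum, hI_def]
    simp [inv_pow, one_div]
  have hY0 : ∀ x ∈ S, HasDerivAt y (deriv y (g x)) (g x) := by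
    intro x hx
    exact ((hy.differentiableOn (by norm_num)).differentiableAt (hU.mem_nhds hx.2)).hasDerivAt
  have hY1 : ∀ x ∈ S, HasDerivAt (deriv y) (deriv (deriv y) (g x)) (g x) := by
    intro x hx
    exact ((hy1.differentiableOn (by norm_num)).differentiableAt (hU.mem_nhds hx.2)).hasDerivAt
  have hY2 : ∀ x ∈ S, HasDerivAt (deriv (deriv y)) (deriv (deriv (deriv y)) (g x)) (g x) := by
    intro x hx
    exact ((hy2.differentiableOn (by norm_num)).differentiableAt (hU.mem_nhds hx.2)).hasDerivAt
  have hC0 : ∀ x ∈ S, HasDerivAt (fun x => y (g x)) (deriv y (g x) * I x ^ 2) x := by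
    intro x hx
    exact (hY0 x hx).comp x (hg' x hx)
  have hC1 : ∀ x ∈ S, HasDerivAt (fun x => deriv y (g x))
      (deriv (deriv y) (g x) * I x ^ 2) x := by
    intro x hx
    exact (hY1 x hx).comp x (hg' x hx)
  have hC2 : ∀ x ∈ S, HasDerivAt (fun x => deriv (deriv y) (g x))
      (deriv (deriv (deriv y)) (g x) * I x ^ 2) x := by
    intro x hx
    exact (hY2 x hx).comp x (hg' x hx)
  have hytil_eq : ytil = fun x => y (g x) * I x ^ 2 - 6 * c * I x := by
    funext x
    rw [hytil x]
    simp only [hI_def, hg_def, ← inv_pow, div_eq_mul_inv]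
    ring
  -- first derivative
  have H1 : ∀ x ∈ S, HasDerivAt ytil (t1 x) x := by
    intro x hx
    rw [hytil_eq]
    have h := ((hC0 x hx).mul ((hI' x hx).pow 2)).sub ((hI' x hx).const_mul (6 * c))
    refine h.congr_deriv ?_
    rw [ht1_def]
    simp only [Pi.pow_apply]
    ring
  have H2 : ∀ x ∈ S, HasDerivAt t1 (t2 x) x := by
    intro x hx
    rw [ht1_def]
    have h := (((hC1 x hx).mul ((hI' x hx).pow 4)).sub
        ((((hC0 x hx).const_mul (2 * c)).mul ((hI' x hx).pow 3)))).add
        (((hI' x hx).pow 2).const_mul (6 * c ^ 2))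
    refine h.congr_deriv ?_
    rw [ht2_def]
    simp only [Pi.pow_apply]
    ring
  have H3 : ∀ x ∈ S, HasDerivAt t2 (t3 x) x := by
    intro x hx
    rw [ht2_def]
    have h := ((((hC2 x hx).mul ((hI' x hx).pow 6)).sub
        ((((hC1 x hx).const_mul (6 * c)).mul ((hI' x hx).pow 5)))).add
        (((hC0 x hx).const_mul (6 * c ^ 2)).mul ((hI' x hx).pow 4))).sub
        (((hI' x hx).pow 3).const_mul (12 * c ^ 3))
    refine h.congr_deriv ?_
    rw [ht3_def]
    simp only [Pi.pow_apply]
    ring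
  have hd1 : ∀ x ∈ S, deriv ytil x = t1 x := fun x hx => (H1 x hx).deriv
  have hE1 : ∀ x ∈ S, deriv ytil =ᶠ[nhds x] t1 := fun x hx =>
    Filter.eventuallyEq_of_mem (hS.mem_nhds hx) hd1
  have hd2 : ∀ x ∈ S, deriv (deriv ytil) x = t2 x := fun x hx =>
    ((hE1 x hx).deriv_eq).trans (H2 x hx).deriv
  have hE2 : deriv (deriv ytil) =ᶠ[nhds x₀] t2 :=
    Filter.eventuallyEq_of_mem (hS.mem_nhds hx₀S) hd2
  have hd3 : deriv (deriv (deriv ytil)) x₀ = t3 x₀ :=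
    hE2.deriv_eq.trans (H3 x₀ hx₀S).deriv
  have i3 : ∀ f : ℂ → ℂ, iteratedDeriv 3 f = deriv (deriv (deriv f)) := by
    intro f
    simp [iteratedDeriv_succ, iteratedDeriv_zero]
  have i2 : ∀ f : ℂ → ℂ, iteratedDeriv 2 f = deriv (deriv f) := by
    intro f
    simp [iteratedDeriv_succ, iteratedDeriv_zero]
  have key := hsol (g x₀) hw₀
  rw [i3, i2] at key
  rw [i3, i2, hd3, hd2 x₀ hx₀S, hd1 x₀ hx₀S, hytil x₀]
  simp only [ht1_def, ht2_def, ht3_def, hI_def, hg_def] at key ⊢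
  simp only [← inv_pow, div_eq_mul_inv] at key ⊢
  linear_combination ((c * x₀ + d)⁻¹) ^ 8 * key
end

section
/- If y solves the generalised Chazy equation with k ≠ ±6 and x̃ = (ax+b)/(cx+d) with ad-bc=1, then (cx+d)⁴·(6ỹ'(x) - ỹ(x)²) = 6y'(x̃) - y(x̃)², where ỹ(x) = (cx+d)⁻²y(x̃) - 6c/(cx+d) and the prime on the left is d/dx while the prime on the right is d/dx̃. -/
set_option maxHeartbeats 1000000


/-- Under the Möbius change of variable `x̃ = (ax+b)/(cx+d)` with `ad-bc = 1`, the quantity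
`6y' - y²` transforms with weight 4:
`(cx+d)⁴(6ỹ'(x) - ỹ(x)²) = 6y'(x̃) - y(x̃)²`. -/
theorem chazy_weight4_transform (k : ℂ) (hk : k ≠ 6) (hk' : k ≠ -6)
    (U : Set ℂ) (hU : IsOpen U) (y : ℂ → ℂ) (hy : ContDiffOn ℂ 3 y U)
    (hsol : ∀ x ∈ U, iteratedDeriv 3 y x - 2 * iteratedDeriv 2 y x * y x
      + 3 * (deriv y x) ^ 2 - (4 / (36 - k ^ 2)) * (6 * deriv y x - (y x) ^ 2) ^ 2 = 0)
    (a b c d : ℂ) (hdet : a * d - b * c = 1)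
    (ytil : ℂ → ℂ)
    (hytil : ∀ x : ℂ, ytil x = ((c * x + d) ^ 2)⁻¹ * y ((a * x + b) / (c * x + d))
      - 6 * c / (c * x + d)) :
    ∀ x : ℂ, c * x + d ≠ 0 → (a * x + b) / (c * x + d) ∈ U →
      (c * x + d) ^ 4 * (6 * deriv ytil x - (ytil x) ^ 2)
        = 6 * deriv y ((a * x + b) / (c * x + d))
          - (y ((a * x + b) / (c * x + d))) ^ 2 := by
  intro x hw hmem
  set w : ℂ := c * x + d with hwdef
  set t : ℂ := (a * x + b) / w with htdef
  have hyd : DifferentiableAt ℂ y t :=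
    ((hy.differentiableOn (by norm_num)).differentiableAt (hU.mem_nhds hmem))
  set Y : ℂ := y t
  set Y' : ℂ := deriv y t
  -- derivative of the Möbius map at x
  have hnum : HasDerivAt (fun z : ℂ => a * z + b) a x := by
    simpa using ((hasDerivAt_id x).const_mul a).add_const b
  have hden : HasDerivAt (fun z : ℂ => c * z + d) c x := by
    simpa using ((hasDerivAt_id x).const_mul c).add_const d
  have hmob : HasDerivAt (fun z : ℂ => (a * z + b) / (c * z + d))
      ((a * w - (a * x + b) * c) / w ^ 2) x := hnum.div hden hw
  have hcomp : HasDerivAt (fun z : ℂ => y ((a * z + b) / (c * z + d)))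
      (Y' * ((a * w - (a * x + b) * c) / w ^ 2)) x := by
    have := (hyd.hasDerivAt).comp x hmob
    exact this
  have hinv : HasDerivAt (fun z : ℂ => ((c * z + d) ^ 2)⁻¹)
      (-(2 * c * w) / (w ^ 2) ^ 2) x := by
    have h2 : HasDerivAt (fun z : ℂ => (c * z + d) ^ 2) (2 * w * c) x := by
      simpa using hden.fun_pow 2
    have := h2.fun_inv (by simpa using pow_ne_zero 2 hw)
    simpa [hwdef] using this.congr_deriv (by ring)
  have hfrac : HasDerivAt (fun z : ℂ => 6 * c / (c * z + d))
      (-(6 * c * c) / w ^ 2) x := by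
    have := (hasDerivAt_const x (6*c)).fun_div hden hw
    simpa using this.congr_deriv (by ring)
  have hder : HasDerivAt ytil
      ((-(2 * c * w) / (w ^ 2) ^ 2) * Y + (w ^ 2)⁻¹ * (Y' * ((a * w - (a * x + b) * c) / w ^ 2))
        - (-(6 * c * c) / w ^ 2)) x := by
    have heq : ytil = fun z : ℂ => ((c * z + d) ^ 2)⁻¹ * y ((a * z + b) / (c * z + d))
        - 6 * c / (c * z + d) := funext hytil
    rw [heq]
    exact (hinv.mul hcomp).sub hfrac
  have hAW : a * w - (a * x + b) * c = 1 := by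
    rw [hwdef]; linear_combination hdet
  rw [hder.deriv, hytil x, hAW, ← hwdef, ← htdef]
  clear_value w t
  clear hwdef htdef hder hinv hfrac hcomp hmob hden hnum hytil hsol
  field_simp
  rw [show y t = Y from rfl]
  ring
end

section
/- If F : ℂ → ℂ is six times differentiable and solves the 6th order ODE 10F⁽⁶⁾(F'')³ - 80(F'')²F⁽³⁾F⁽⁵⁾ - 51(F'')²(F⁽⁴⁾)² + 336F''(F''')²F⁽⁴⁾ - 224(F''')⁴ = 0 on an open set, and a,b,c,d ∈ ℂ with ad-bc=1 and cx+d ≠ 0, then F̃(x) = (cx+d)·F((ax+b)/(cx+d)) also solves the same ODE. -/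
set_option maxHeartbeats 1000000

lemma aux_hasDerivAt_iter (U : Set ℂ) (hU : IsOpen U) (F : ℂ → ℂ)
    (hF : ContDiffOn ℂ 6 F U) (k : ℕ) (hk : k < 6) {y : ℂ} (hy : y ∈ U) :
    HasDerivAt (iteratedDeriv k F) (iteratedDeriv (k + 1) F y) y := by
  have heq : Set.EqOn (iteratedDerivWithin k F U) (iteratedDeriv k F) U := by
    intro z hz
    simp [iteratedDerivWithin_eq_iteratedFDerivWithin, iteratedDeriv_eq_iteratedFDeriv,
      iteratedFDerivWithin_of_isOpen k hU hz]
  have hdiff : DifferentiableWithinAt ℂ (iteratedDerivWithin k F U) U y :=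
    hF.differentiableOn_iteratedDerivWithin (by exact_mod_cast hk) hU.uniqueDiffOn y hy
  have hev : iteratedDerivWithin k F U =ᶠ[nhds y] iteratedDeriv k F :=
    Filter.eventuallyEq_of_mem (hU.mem_nhds hy) heq
  have hdAt : DifferentiableAt ℂ (iteratedDeriv k F) y :=
    (Filter.EventuallyEq.differentiableAt_iff hev).mp (hdiff.differentiableAt (hU.mem_nhds hy))
  have := hdAt.hasDerivAt
  rwa [← iteratedDeriv_succ] at this

lemma aux_hasDerivAt_spow (c d : ℂ) (n : ℕ) (hn : 1 ≤ n) {z : ℂ} (hz : c * z + d ≠ 0) :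
    HasDerivAt (fun w => ((c * w + d) ^ n)⁻¹) (-(n : ℂ) * c * ((c * z + d) ^ (n + 1))⁻¹) z := by
  have hlin : HasDerivAt (fun w : ℂ => c * w + d) c z := by
    simpa using ((hasDerivAt_id z).const_mul c).add_const d
  have hp : HasDerivAt (fun w => (c * w + d) ^ n) ((n : ℂ) * (c * z + d) ^ (n - 1) * c) z :=
    hlin.pow n
  have h := hp.inv (pow_ne_zero n hz)
  refine h.congr_deriv (Eq.symm ?_)
  have key : ((c * z + d) ^ n) ^ 2 = (c * z + d) ^ (n - 1) * (c * z + d) ^ (n + 1) := by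
    rw [← pow_add, ← pow_mul]; congr 1; omega
  rw [key]
  have h1 : (c * z + d) ^ (n - 1) ≠ 0 := pow_ne_zero _ hz
  have h2 : (c * z + d) ^ (n + 1) ≠ 0 := pow_ne_zero _ hz
  field_simp

noncomputable def sl2G0 (a b c d : ℂ) (F : ℂ → ℂ) : ℂ → ℂ :=
  fun z => (c * z + d) * F ((a * z + b) / (c * z + d))

noncomputable def sl2G1 (a b c d : ℂ) (F : ℂ → ℂ) : ℂ → ℂ :=
  fun z => c * F ((a * z + b) / (c * z + d))
    + ((c * z + d) ^ 1)⁻¹ * deriv F ((a * z + b) / (c * z + d))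

noncomputable def sl2G2 (a b c d : ℂ) (F : ℂ → ℂ) : ℂ → ℂ :=
  fun z => ((c * z + d) ^ 3)⁻¹ * iteratedDeriv 2 F ((a * z + b) / (c * z + d))

noncomputable def sl2G3 (a b c d : ℂ) (F : ℂ → ℂ) : ℂ → ℂ :=
  fun z => (-3 * c) * (((c * z + d) ^ 4)⁻¹ * iteratedDeriv 2 F ((a * z + b) / (c * z + d)))
    + ((c * z + d) ^ 5)⁻¹ * iteratedDeriv 3 F ((a * z + b) / (c * z + d))

noncomputable def sl2G4 (a b c d : ℂ) (F : ℂ → ℂ) : ℂ → ℂ :=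
  fun z => (12 * c ^ 2) * (((c * z + d) ^ 5)⁻¹ * iteratedDeriv 2 F ((a * z + b) / (c * z + d)))
    + (-8 * c) * (((c * z + d) ^ 6)⁻¹ * iteratedDeriv 3 F ((a * z + b) / (c * z + d)))
    + ((c * z + d) ^ 7)⁻¹ * iteratedDeriv 4 F ((a * z + b) / (c * z + d))

noncomputable def sl2G5 (a b c d : ℂ) (F : ℂ → ℂ) : ℂ → ℂ :=
  fun z => (-60 * c ^ 3) * (((c * z + d) ^ 6)⁻¹ * iteratedDeriv 2 F ((a * z + b) / (c * z + d)))
    + (60 * c ^ 2) * (((c * z + d) ^ 7)⁻¹ * iteratedDeriv 3 F ((a * z + b) / (c * z + d)))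
    + (-15 * c) * (((c * z + d) ^ 8)⁻¹ * iteratedDeriv 4 F ((a * z + b) / (c * z + d)))
    + ((c * z + d) ^ 9)⁻¹ * iteratedDeriv 5 F ((a * z + b) / (c * z + d))

noncomputable def sl2G6 (a b c d : ℂ) (F : ℂ → ℂ) : ℂ → ℂ :=
  fun z => (360 * c ^ 4) * (((c * z + d) ^ 7)⁻¹ * iteratedDeriv 2 F ((a * z + b) / (c * z + d)))
    + (-480 * c ^ 3) * (((c * z + d) ^ 8)⁻¹ * iteratedDeriv 3 F ((a * z + b) / (c * z + d)))
    + (180 * c ^ 2) * (((c * z + d) ^ 9)⁻¹ * iteratedDeriv 4 F ((a * z + b) / (c * z + d)))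
    + (-24 * c) * (((c * z + d) ^ 10)⁻¹ * iteratedDeriv 5 F ((a * z + b) / (c * z + d)))
    + ((c * z + d) ^ 11)⁻¹ * iteratedDeriv 6 F ((a * z + b) / (c * z + d))

/-- The 6th order ODE characterising flat `(2,3,5)`-distributions is invariant under the
weight `-1` action `F̃(x) = (cx+d) F((ax+b)/(cx+d))` of `SL₂(ℂ)`. -/
theorem ode6_sl2_action (U : Set ℂ) (hU : IsOpen U) (F : ℂ → ℂ) (hF : ContDiffOn ℂ 6 F U)
    (hsol : ∀ x ∈ U, 10 * iteratedDeriv 6 F x * (iteratedDeriv 2 F x) ^ 3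
      - 80 * (iteratedDeriv 2 F x) ^ 2 * iteratedDeriv 3 F x * iteratedDeriv 5 F x
      - 51 * (iteratedDeriv 2 F x) ^ 2 * (iteratedDeriv 4 F x) ^ 2
      + 336 * iteratedDeriv 2 F x * (iteratedDeriv 3 F x) ^ 2 * iteratedDeriv 4 F x
      - 224 * (iteratedDeriv 3 F x) ^ 4 = 0)
    (a b c d : ℂ) (hdet : a * d - b * c = 1)
    (Ftil : ℂ → ℂ)
    (hFtil : ∀ x : ℂ, Ftil x = (c * x + d) * F ((a * x + b) / (c * x + d))) :
    ∀ x : ℂ, c * x + d ≠ 0 → (a * x + b) / (c * x + d) ∈ U →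
      10 * iteratedDeriv 6 Ftil x * (iteratedDeriv 2 Ftil x) ^ 3
        - 80 * (iteratedDeriv 2 Ftil x) ^ 2 * iteratedDeriv 3 Ftil x * iteratedDeriv 5 Ftil x
        - 51 * (iteratedDeriv 2 Ftil x) ^ 2 * (iteratedDeriv 4 Ftil x) ^ 2
        + 336 * iteratedDeriv 2 Ftil x * (iteratedDeriv 3 Ftil x) ^ 2 * iteratedDeriv 4 Ftil x
        - 224 * (iteratedDeriv 3 Ftil x) ^ 4 = 0 := by
  intro x hx hxU
  set V : Set ℂ := {z | c * z + d ≠ 0 ∧ (a * z + b) / (c * z + d) ∈ U} with hVdef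
  have hW : IsOpen {z : ℂ | c * z + d ≠ 0} := by
    have hc : Continuous fun z : ℂ => c * z + d := by fun_prop
    exact isOpen_compl_singleton.preimage hc
  have hVopen : IsOpen V := by
    have hcont : ContinuousOn (fun z : ℂ => (a * z + b) / (c * z + d)) {z | c * z + d ≠ 0} := by
      apply ContinuousOn.div
      · fun_prop
      · fun_prop
      · exact fun z hz => hz
    have h := hcont.isOpen_inter_preimage hW hU
    have hVeq : V = {z : ℂ | c * z + d ≠ 0} ∩
        (fun z : ℂ => (a * z + b) / (c * z + d)) ⁻¹' U := by
      ext z; exact Iff.rfl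
    rw [hVeq]; exact h
  have hxV : x ∈ V := ⟨hx, hxU⟩
  -- derivative of the Möbius map
  have hφ : ∀ z ∈ V, HasDerivAt (fun w => (a * w + b) / (c * w + d)) (((c * z + d) ^ 2)⁻¹) z := by
    intro z hz
    have h1 : HasDerivAt (fun w : ℂ => a * w + b) a z := by
      simpa using ((hasDerivAt_id z).const_mul a).add_const b
    have h2 : HasDerivAt (fun w : ℂ => c * w + d) c z := by
      simpa using ((hasDerivAt_id z).const_mul c).add_const d
    have h := h1.div h2 hz.1
    refine h.congr_deriv (Eq.symm ?_)
    have hnum : a * (c * z + d) - (a * z + b) * c = 1 := by linear_combination hdet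
    rw [hnum, one_div]
  have hchain : ∀ k : ℕ, k < 6 → ∀ z ∈ V,
      HasDerivAt (fun w => iteratedDeriv k F ((a * w + b) / (c * w + d)))
        (iteratedDeriv (k + 1) F ((a * z + b) / (c * z + d)) * ((c * z + d) ^ 2)⁻¹) z := by
    intro k hk z hz
    have hg := aux_hasDerivAt_iter U hU F hF k hk hz.2
    have := hg.comp z (hφ z hz)
    exact this
  have hlin : ∀ z : ℂ, HasDerivAt (fun w : ℂ => c * w + d) c z := fun z => by
    simpa using ((hasDerivAt_id z).const_mul c).add_const d
  -- derivative steps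
  have hD0 : ∀ z ∈ V, HasDerivAt (sl2G0 a b c d F) (sl2G1 a b c d F z) z := by
    intro z hz
    have h0 := hchain 0 (by norm_num) z hz
    norm_num [iteratedDeriv_zero] at h0
    have h := (hlin z).mul h0
    unfold sl2G0 sl2G1
    refine h.congr_deriv (Eq.symm ?_)
    rw [pow_one]
    field_simp [hz.1]
  have hD1 : ∀ z ∈ V, HasDerivAt (sl2G1 a b c d F) (sl2G2 a b c d F z) z := by
    intro z hz
    have h0 := hchain 0 (by norm_num) z hz
    norm_num [iteratedDeriv_zero] at h0
    have h1 := hchain 1 (by norm_num) z hz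
    norm_num at h1
    have h := (h0.const_mul c).add ((aux_hasDerivAt_spow c d 1 (by norm_num) hz.1).mul h1)
    unfold sl2G1 sl2G2
    refine h.congr_deriv (Eq.symm ?_)
    simp only [← inv_pow]
    push_cast
    ring
  have hD2 : ∀ z ∈ V, HasDerivAt (sl2G2 a b c d F) (sl2G3 a b c d F z) z := by
    intro z hz
    have h2 := hchain 2 (by norm_num) z hz; norm_num at h2
    have h := (aux_hasDerivAt_spow c d 3 (by norm_num) hz.1).mul h2
    unfold sl2G2 sl2G3
    refine h.congr_deriv (Eq.symm ?_)
    simp only [← inv_pow]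
    push_cast
    ring
  have hD3 : ∀ z ∈ V, HasDerivAt (sl2G3 a b c d F) (sl2G4 a b c d F z) z := by
    intro z hz
    have h2 := hchain 2 (by norm_num) z hz; norm_num at h2
    have h3 := hchain 3 (by norm_num) z hz; norm_num at h3
    have h := (((aux_hasDerivAt_spow c d 4 (by norm_num) hz.1).mul h2).const_mul
      (-3 * c)).add ((aux_hasDerivAt_spow c d 5 (by norm_num) hz.1).mul h3)
    unfold sl2G3 sl2G4
    refine h.congr_deriv (Eq.symm ?_)
    simp only [← inv_pow]
    push_cast
    ring
  have hD4 : ∀ z ∈ V, HasDerivAt (sl2G4 a b c d F) (sl2G5 a b c d F z) z := by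
    intro z hz
    have h2 := hchain 2 (by norm_num) z hz; norm_num at h2
    have h3 := hchain 3 (by norm_num) z hz; norm_num at h3
    have h4 := hchain 4 (by norm_num) z hz; norm_num at h4
    have h := ((((aux_hasDerivAt_spow c d 5 (by norm_num) hz.1).mul h2).const_mul
      (12 * c ^ 2)).add (((aux_hasDerivAt_spow c d 6 (by norm_num) hz.1).mul h3).const_mul
      (-8 * c))).add ((aux_hasDerivAt_spow c d 7 (by norm_num) hz.1).mul h4)
    unfold sl2G4 sl2G5
    refine h.congr_deriv (Eq.symm ?_)
    simp only [← inv_pow]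
    push_cast
    ring
  have hD5 : ∀ z ∈ V, HasDerivAt (sl2G5 a b c d F) (sl2G6 a b c d F z) z := by
    intro z hz
    have h2 := hchain 2 (by norm_num) z hz; norm_num at h2
    have h3 := hchain 3 (by norm_num) z hz; norm_num at h3
    have h4 := hchain 4 (by norm_num) z hz; norm_num at h4
    have h5 := hchain 5 (by norm_num) z hz; norm_num at h5
    have h := (((((aux_hasDerivAt_spow c d 6 (by norm_num) hz.1).mul h2).const_mul
      (-60 * c ^ 3)).add (((aux_hasDerivAt_spow c d 7 (by norm_num) hz.1).mul h3).const_mul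
      (60 * c ^ 2))).add (((aux_hasDerivAt_spow c d 8 (by norm_num) hz.1).mul h4).const_mul
      (-15 * c))).add ((aux_hasDerivAt_spow c d 9 (by norm_num) hz.1).mul h5)
    unfold sl2G5 sl2G6
    refine h.congr_deriv (Eq.symm ?_)
    simp only [← inv_pow]
    push_cast
    ring
  -- identify the iterated derivatives of Ftil on V
  have step : ∀ (n : ℕ) (Gn Gn1 : ℂ → ℂ), Set.EqOn (iteratedDeriv n Ftil) Gn V →
      (∀ z ∈ V, HasDerivAt Gn (Gn1 z) z) →
      Set.EqOn (iteratedDeriv (n + 1) Ftil) Gn1 V := by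
    intro n Gn Gn1 hEq hD z hz
    have heq : iteratedDeriv n Ftil =ᶠ[nhds z] Gn :=
      Filter.eventuallyEq_of_mem (hVopen.mem_nhds hz) hEq
    rw [iteratedDeriv_succ]
    show deriv (iteratedDeriv n Ftil) z = Gn1 z
    rw [heq.deriv_eq]
    exact (hD z hz).deriv
  have hE0 : Set.EqOn (iteratedDeriv 0 Ftil) (sl2G0 a b c d F) V := by
    intro z _
    simp [iteratedDeriv_zero, hFtil z, sl2G0]
  have hE1 : Set.EqOn (iteratedDeriv 1 Ftil) (sl2G1 a b c d F) V := step 0 _ _ hE0 hD0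
  have hE2 : Set.EqOn (iteratedDeriv 2 Ftil) (sl2G2 a b c d F) V := step 1 _ _ hE1 hD1
  have hE3 : Set.EqOn (iteratedDeriv 3 Ftil) (sl2G3 a b c d F) V := step 2 _ _ hE2 hD2
  have hE4 : Set.EqOn (iteratedDeriv 4 Ftil) (sl2G4 a b c d F) V := step 3 _ _ hE3 hD3
  have hE5 : Set.EqOn (iteratedDeriv 5 Ftil) (sl2G5 a b c d F) V := step 4 _ _ hE4 hD4
  have hE6 : Set.EqOn (iteratedDeriv 6 Ftil) (sl2G6 a b c d F) V := step 5 _ _ hE5 hD5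
  rw [hE2 hxV, hE3 hxV, hE4 hxV, hE5 hxV, hE6 hxV]
  simp only [sl2G2, sl2G3, sl2G4, sl2G5, sl2G6]
  have hs : c * x + d ≠ 0 := hx
  have hsol' := hsol _ hxU
  set f2 := iteratedDeriv 2 F ((a * x + b) / (c * x + d)) with hf2
  set f3 := iteratedDeriv 3 F ((a * x + b) / (c * x + d)) with hf3
  set f4 := iteratedDeriv 4 F ((a * x + b) / (c * x + d)) with hf4
  set f5 := iteratedDeriv 5 F ((a * x + b) / (c * x + d)) with hf5
  set f6 := iteratedDeriv 6 F ((a * x + b) / (c * x + d)) with hf6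
  have key : (10 : ℂ) * f6 * f2 ^ 3 - 80 * f2 ^ 2 * f3 * f5 - 51 * f2 ^ 2 * f4 ^ 2
      + 336 * f2 * f3 ^ 2 * f4 - 224 * f3 ^ 4 = 0 := hsol'
  simp only [← inv_pow]
  linear_combination (((c * x + d) : ℂ)⁻¹) ^ 20 * key
end

section
/- The function y(x) = -10/(3x) solves the generalised Chazy equation with parameter k = 2/3, i.e. y''' - 2y''y + 3(y')² - (9/80)(6y'-y²)² = 0 for x ≠ 0; more generally, for any distinct constants B, C, the function y(x) = -8/(3(x+C)) - 10/(3(x+B)) solves the same equation for x ∉ {-B, -C}. -/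
open Topology Filter
lemma ev_ne (b x : ℂ) (h : x + b ≠ 0) : ∀ᶠ z in 𝓝 x, z + b ≠ 0 :=
  (continuousAt_id.add continuousAt_const).eventually_ne h

lemma derivs_aux (a b c d x : ℂ) (hb : x + b ≠ 0) (hd : x + d ≠ 0) :
    deriv (fun z => a/(z+b) + c/(z+d)) x = -a/(x+b)^2 + -c/(x+d)^2 ∧
    iteratedDeriv 2 (fun z => a/(z+b) + c/(z+d)) x = 2*a/(x+b)^3 + 2*c/(x+d)^3 ∧
    iteratedDeriv 3 (fun z => a/(z+b) + c/(z+d)) x = -6*a/(x+b)^4 + -6*c/(x+d)^4 := by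
  set f : ℂ → ℂ := fun z => a/(z+b) + c/(z+d) with hf
  set f1 : ℂ → ℂ := fun z => -a/(z+b)^2 + -c/(z+d)^2 with hf1
  set f2 : ℂ → ℂ := fun z => 2*a/(z+b)^3 + 2*c/(z+d)^3 with hf2
  set f3 : ℂ → ℂ := fun z => -6*a/(z+b)^4 + -6*c/(z+d)^4 with hf3
  have H1 : ∀ z : ℂ, z + b ≠ 0 → z + d ≠ 0 → HasDerivAt f (f1 z) z := by
    intro z hzb hzd
    have h1 : HasDerivAt (fun z : ℂ => a/(z+b))
        ((0 * (z+b) - a * 1)/(z+b)^2) z :=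
      (hasDerivAt_const z a).div ((hasDerivAt_id z).add_const b) hzb
    have h2 : HasDerivAt (fun z : ℂ => c/(z+d))
        ((0 * (z+d) - c * 1)/(z+d)^2) z :=
      (hasDerivAt_const z c).div ((hasDerivAt_id z).add_const d) hzd
    refine (h1.add h2).congr_deriv ?_
    simp only [hf1]; ring
  have H2 : ∀ z : ℂ, z + b ≠ 0 → z + d ≠ 0 → HasDerivAt f1 (f2 z) z := by
    intro z hzb hzd
    have hgb : HasDerivAt (fun z : ℂ => (z+b)^2) (2 * (z+b)) z := by
      simpa using ((hasDerivAt_id z).add_const b).fun_pow 2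
    have hgd : HasDerivAt (fun z : ℂ => (z+d)^2) (2 * (z+d)) z := by
      simpa using ((hasDerivAt_id z).add_const d).fun_pow 2
    have h1 : HasDerivAt (fun z : ℂ => -a/(z+b)^2)
        ((0 * (z+b)^2 - (-a) * (2*(z+b)))/((z+b)^2)^2) z :=
      (hasDerivAt_const z (-a)).div hgb (pow_ne_zero 2 hzb)
    have h2 : HasDerivAt (fun z : ℂ => -c/(z+d)^2)
        ((0 * (z+d)^2 - (-c) * (2*(z+d)))/((z+d)^2)^2) z :=
      (hasDerivAt_const z (-c)).div hgd (pow_ne_zero 2 hzd)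
    refine (h1.add h2).congr_deriv ?_
    simp only [hf2]
    field_simp
    ring
  have H3 : ∀ z : ℂ, z + b ≠ 0 → z + d ≠ 0 → HasDerivAt f2 (f3 z) z := by
    intro z hzb hzd
    have hgb : HasDerivAt (fun z : ℂ => (z+b)^3) (3 * (z+b)^2) z := by
      have := ((hasDerivAt_id z).add_const b).fun_pow 3
      norm_num at this; simpa using this
    have hgd : HasDerivAt (fun z : ℂ => (z+d)^3) (3 * (z+d)^2) z := by
      have := ((hasDerivAt_id z).add_const d).fun_pow 3
      norm_num at this; simpa using this
    have h1 : HasDerivAt (fun z : ℂ => 2*a/(z+b)^3)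
        ((0 * (z+b)^3 - (2*a) * (3*(z+b)^2))/((z+b)^3)^2) z :=
      (hasDerivAt_const z (2*a)).div hgb (pow_ne_zero 3 hzb)
    have h2 : HasDerivAt (fun z : ℂ => 2*c/(z+d)^3)
        ((0 * (z+d)^3 - (2*c) * (3*(z+d)^2))/((z+d)^3)^2) z :=
      (hasDerivAt_const z (2*c)).div hgd (pow_ne_zero 3 hzd)
    refine (h1.add h2).congr_deriv ?_
    simp only [hf3]
    field_simp
    ring
  have key2 : ∀ z : ℂ, z + b ≠ 0 → z + d ≠ 0 → iteratedDeriv 2 f z = f2 z := by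
    intro z hzb hzd
    rw [iteratedDeriv_succ, iteratedDeriv_one]
    have e1z : deriv f =ᶠ[𝓝 z] f1 := by
      filter_upwards [ev_ne b z hzb, ev_ne d z hzd] with w hwb hwd using (H1 w hwb hwd).deriv
    rw [e1z.deriv_eq]
    exact (H2 z hzb hzd).deriv
  refine ⟨(H1 x hb hd).deriv, key2 x hb hd, ?_⟩
  rw [iteratedDeriv_succ]
  have e2x : iteratedDeriv 2 f =ᶠ[𝓝 x] f2 := by
    filter_upwards [ev_ne b x hb, ev_ne d x hd] with w hwb hwd using key2 w hwb hwd
  rw [e2x.deriv_eq]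
  exact (H3 x hb hd).deriv

set_option maxHeartbeats 1000000 in
/-- `y(x) = -10/(3x)` solves the generalised Chazy equation with `k = 2/3`, and more
generally, for distinct constants `B, C`, so does
`y(x) = -8/(3(x+C)) - 10/(3(x+B))`. -/
theorem chazy_k23_sol2 :
    (∀ y : ℂ → ℂ, (∀ x : ℂ, y x = -10 / (3 * x)) →
      ∀ x : ℂ, x ≠ 0 →
        iteratedDeriv 3 y x - 2 * iteratedDeriv 2 y x * y x + 3 * (deriv y x) ^ 2
          - (9 / 80) * (6 * deriv y x - (y x) ^ 2) ^ 2 = 0) ∧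
    (∀ B C : ℂ, B ≠ C → ∀ y : ℂ → ℂ,
      (∀ x : ℂ, y x = -8 / (3 * (x + C)) - 10 / (3 * (x + B))) →
      ∀ x : ℂ, x ≠ -B → x ≠ -C →
        iteratedDeriv 3 y x - 2 * iteratedDeriv 2 y x * y x + 3 * (deriv y x) ^ 2
          - (9 / 80) * (6 * deriv y x - (y x) ^ 2) ^ 2 = 0) := by
  constructor
  · intro y hy x hx
    have hyf : y = fun z => (-10/3)/(z+0) + (0:ℂ)/(z+0) := by
      funext z; rw [hy z]; ring
    subst hyf
    have hb : x + 0 ≠ 0 := by simpa using hx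
    obtain ⟨d1, d2, d3⟩ := derivs_aux (-10/3) 0 0 0 x hb hb
    rw [d1, d2, d3]
    simp only [add_zero] at *
    simp only [div_eq_mul_inv, ← inv_pow]
    ring
  · intro B C _ y hy x hxB hxC
    have hyf : y = fun z => (-8/3)/(z+C) + (-10/3)/(z+B) := by
      funext z; rw [hy z, ← div_div, ← div_div]; ring
    subst hyf
    have hb : x + C ≠ 0 := fun h => hxC (by linear_combination h)
    have hd : x + B ≠ 0 := fun h => hxB (by linear_combination h)
    obtain ⟨d1, d2, d3⟩ := derivs_aux (-8/3) C (-10/3) B x hb hd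
    rw [d1, d2, d3]
    beta_reduce
    simp only [div_eq_mul_inv, ← inv_pow]
    set u := (x+C)⁻¹
    set v := (x+B)⁻¹
    ring
end

section
/- Let k ≠ ±6 and m = 4/(36-k²), ℓ ≠ 0, and consider the 4th-order equation E(ℓ,m): f³f'''' - 2(ℓ+2)f²f'f''' + 3(-12ℓm+ℓ-1)f²(f'')² + 12(ℓ²m+6ℓm+1)f(f')²f'' - (ℓ³m+12ℓ²m+36ℓm+ℓ+6)(f')⁴ = 0. Under the substitution f = 1/h, d/dx = (1/h)d/dt, the equation E(ℓ,m) transforms into h³h'''' + (2ℓ-11)h²h'h''' + (36ℓm-3ℓ-7)h²(h'')² + (12ℓ²m-144ℓm-2ℓ+59)h(h')²h'' + (ℓ³m-24ℓ²m+144ℓm+4ℓ-48)(h')⁴ = 0. If the transformed equation is again of the form E(j,n) for some j ≠ 0 and n, then necessarily n ∈ {16/135, 9/80}, i.e. the dual Chazy parameter satisfies k = ±2/3 or k = ±3/2. -/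
/-- Uniqueness of the Legendre duality for the generalised Chazy equation: if the equation
obtained from `E(ℓ,m)` by the substitution `f = 1/h`, `d/dx = (1/h) d/dt` is again of the
form `E(j,n)` (matching coefficients), then `n = 16/135` or `n = 9/80`, i.e. the dual Chazy
parameter is `k = ±2/3` or `k = ±3/2`. -/
theorem chazy_duality_uniqueness (l m j n : ℂ) (hl : l ≠ 0) (hj : j ≠ 0)
    (h1 : 2 * l - 11 = -2 * (j + 2))
    (h2 : 36 * l * m - 3 * l - 7 = 3 * (-12 * j * n + j - 1))
    (h3 : 12 * l ^ 2 * m - 144 * l * m - 2 * l + 59 = 12 * (j ^ 2 * n + 6 * j * n + 1))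
    (h4 : l ^ 3 * m - 24 * l ^ 2 * m + 144 * l * m + 4 * l - 48
      = -(j ^ 3 * n + 12 * j ^ 2 * n + 36 * j * n + j + 6)) :
    n = 16 / 135 ∨ n = 9 / 80 := by
  have hl2 : 2 * l = 7 - 2 * j := by linear_combination h1
  have hm : 72 * l * m = 29 - 72 * j * n := by linear_combination 2 * h2 + 3 * hl2
  have hp3 : 360 * j * n = 34 * j + 13 := by
    linear_combination 12 * h3 - (2 * l - 24) * hm - (17 - 72 * j * n) * hl2
  have hp4 : 1440 * j ^ 2 * n + 10440 * j * n = 116 * j ^ 2 + 1108 * j + 317 := by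
    linear_combination -288 * h4 + (4 * l ^ 2 - 96 * l + 576) * hm +
      ((2 * l + 7 - 2 * j) * (29 - 72 * j * n) - 48 * (29 - 72 * j * n) + 576) * hl2
  have hq : (2 * j - 3) * (j - 2) = 0 := by
    linear_combination (1 / 10) * hp4 - ((4 * j + 29) / 10) * hp3
  rcases mul_eq_zero.mp hq with h | h
  · left
    have hj32 : j = 3 / 2 := by linear_combination h / 2
    subst hj32
    linear_combination hp3 / 540
  · right
    have hj2 : j = 2 := by linear_combination h
    subst hj2
    linear_combination hp3 / 720
end
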